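/- If K is a finite-dimensional Banach space and L is a topological vector space in which all closed vector subspaces are separable, then every closed vector subspace of K × L is separable. -/

import Mathlib

set_option synthInstance.maxHeartbeats 1000000
set_option maxHeartbeats 2000000


/-- If `K` is a finite-dimensional (real) Banach space and `L` is a Hausdorff topological
vector space in which all closed vector subspaces are separable, then every closed vector
subspace of `K × L` is separable. -/
theorem closed_subspaces_of_product_with_finite_dimensional
    (K L : Type*) [NormedAddCommGroup K] [NormedSpace ℝ K] [FiniteDimensional ℝ K]
    [AddCommGroup L] [Module ℝ L] [TopologicalSpace L] [IsTopologicalAddGroup L]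
    [ContinuousSMul ℝ L] [T2Space L]
    (hL : ∀ N : Submodule ℝ L, IsClosed (N : Set L) → TopologicalSpace.SeparableSpace N)
    (C : Submodule ℝ (K × L)) (hC : IsClosed (C : Set (K × L))) :
    TopologicalSpace.SeparableSpace C := by
  classical
  -- the projection to K, restricted to C
  set π : C →ₗ[ℝ] K := (LinearMap.fst ℝ K L).comp C.subtype with hπ
  set C₁ := LinearMap.range π with hC₁
  set π' : C →ₗ[ℝ] C₁ := π.rangeRestrict with hπ'
  obtain ⟨s, hs⟩ := π'.exists_rightInverse_of_surjective (LinearMap.range_rangeRestrict π)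
  have hs' : ∀ x : C₁, π' (s x) = x := fun x => by
    have := congrArg (fun f => f x) hs; simpa using this
  -- s is continuous since C₁ is finite dimensional
  have hscont : Continuous s := s.continuous_of_finiteDimensional
  -- the "kernel" subspace of L
  set N : Submodule ℝ L := Submodule.comap (LinearMap.inr ℝ K L) C with hN
  have hNclosed : IsClosed (N : Set L) := by
    have : (N : Set L) = (fun l : L => ((0 : K), l)) ⁻¹' (C : Set (K × L)) := rfl
    rw [this]
    exact hC.preimage (by continuity)
  haveI hNsep : TopologicalSpace.SeparableSpace N := hL N hNclosed
  haveI hC₁sep : TopologicalSpace.SeparableSpace C₁ := by infer_instance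
  -- the surjection
  set F : C₁ × N → C := fun p =>
    ⟨(s p.1 : K × L) + ((0 : K), (p.2 : L)), C.add_mem (s p.1).2 (Submodule.mem_comap.mp p.2.2)⟩ with hF
  have hFcont : Continuous F := by
    apply Continuous.subtype_mk
    exact ((continuous_subtype_val.comp (hscont.comp continuous_fst))).add
      (continuous_const.prodMk (continuous_subtype_val.comp continuous_snd))
  have hFsurj : Function.Surjective F := by
    intro c
    set x := π' c with hx
    have hmem : ((c : K × L) - (s x : K × L)).1 = 0 := by
      have h1 : π (s x) = π c := by
        have := hs' x
        exact congrArg Subtype.val this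
      have : ((s x : K × L)).1 = (c : K × L).1 := h1
      simp [this]
    set l := ((c : K × L) - (s x : K × L)).2 with hl
    have hsub : (c : K × L) - (s x : K × L) ∈ C := C.sub_mem c.2 (s x).2
    have hlN : l ∈ N := by
      have heq : ((0 : K), l) = (c : K × L) - (s x : K × L) := by
        ext
        · exact hmem.symm
        · rfl
      refine Submodule.mem_comap.mpr ?_
      show ((0 : K), l) ∈ C
      rw [heq]; exact hsub
    refine ⟨(x, ⟨l, hlN⟩), ?_⟩
    apply Subtype.ext
    show (s x : K × L) + ((0 : K), l) = (c : K × L)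
    have heq : ((0 : K), l) = (c : K × L) - (s x : K × L) := by
      ext
      · exact hmem.symm
      · rfl
    rw [heq]; abel
  exact (hFsurj.denseRange).separableSpace hFcont
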